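/- arXiv:2108.07587 — 2 statements merged into one kernel-verified Lean document; each statement's English description precedes it below -/
import Mathlib

section
/- The operators T_i = id^{⊗(i-1)} ⊗ T ⊗ id^{⊗(r-i-1)} on V^{⊗r} (where T acts on the i-th and (i+1)-st tensor factors by the q-swap rule) satisfy the braid relation T_i T_{i+1} T_i = T_{i+1} T_i T_{i+1} for 1 ≤ i ≤ r-2. -/
set_option maxHeartbeats 1000000
set_option synthInstance.maxHeartbeats 1000000

noncomputable section

abbrev Kq : Type := RatFunc ℚ

def q : Kq := RatFunc.X

/-- The tensor power `V^{⊗r}` of the `n`-dimensional space `V`, realized as the free module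
on the basis `M_f = v_{f(1)} ⊗ … ⊗ v_{f(r)}`, indexed by functions `f : {1,…,r} → {1,…,n}`. -/
abbrev Vr (n r : ℕ) := (Fin r → Fin n) → Kq

/-- The basis `M_f` of `V^{⊗r}`. -/
def bVr (n r : ℕ) : Module.Basis (Fin r → Fin n) Kq (Vr n r) := Pi.basisFun Kq _

/-- The operator `T_i = id^{⊗(i-1)} ⊗ T ⊗ id^{⊗(r-i-1)}` acting on the adjacent tensor factors
at (0-indexed) positions `a, a+1` by the q-swap rule: on a basis tensor `M_f` it gives
`M_{s f}` if `f(a) < f(a+1)`, `M_{s f} + (q⁻¹-q) M_f` if `f(a) > f(a+1)`, and `q⁻¹ M_f` if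
`f(a) = f(a+1)`, where `s` swaps positions `a` and `a+1`. -/
def Tq (n r a : ℕ) (ha : a + 1 < r) : Module.End Kq (Vr n r) :=
  (bVr n r).constr Kq fun f =>
    let pa : Fin r := ⟨a, Nat.lt_of_succ_lt ha⟩
    let pb : Fin r := ⟨a + 1, ha⟩
    if f pa < f pb then bVr n r (f ∘ Equiv.swap pa pb)
    else if f pb < f pa then bVr n r (f ∘ Equiv.swap pa pb) + (q⁻¹ - q) • bVr n r f
    else q⁻¹ • bVr n r f

lemma Tq_apply (n r a : ℕ) (ha : a + 1 < r) (f : Fin r → Fin n) :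
    Tq n r a ha (bVr n r f) =
    if f ⟨a, Nat.lt_of_succ_lt ha⟩ < f ⟨a + 1, ha⟩ then
      bVr n r (f ∘ Equiv.swap ⟨a, Nat.lt_of_succ_lt ha⟩ ⟨a + 1, ha⟩)
    else if f ⟨a + 1, ha⟩ < f ⟨a, Nat.lt_of_succ_lt ha⟩ then
      bVr n r (f ∘ Equiv.swap ⟨a, Nat.lt_of_succ_lt ha⟩ ⟨a + 1, ha⟩) + (q⁻¹ - q) • bVr n r f
    else q⁻¹ • bVr n r f := by
  simp only [Tq, Module.Basis.constr_basis]

lemma aux_braid {K M : Type*} [Field K] [AddCommGroup M] [Module K M]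
    (u v : K) (h : v * u = 1) (X Y F : M) :
    u • X + (u * (u - v)) • Y + (u * (u * (u - v))) • F =
      u • X + (u - v) • F + ((u * (u - v)) • Y + ((u - v) * (u * (u - v))) • F) := by
  have key : (u - v) + (u - v) * (u * (u - v)) = u * (u * (u - v)) := by
    linear_combination (v - u) * h
  rw [← key, add_smul]
  abel

/-- The operators `T_i` satisfy the braid relation `T_i T_{i+1} T_i = T_{i+1} T_i T_{i+1}`. -/
theorem stmt3 (n r a : ℕ) (ha : a + 2 < r) :
    Tq n r a (by omega) * Tq n r (a + 1) ha * Tq n r a (by omega) =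
      Tq n r (a + 1) ha * Tq n r a (by omega) * Tq n r (a + 1) ha := by
  apply Module.Basis.ext (bVr n r)
  intro f
  set pa : Fin r := ⟨a, by omega⟩ with hpa
  set pb : Fin r := ⟨a + 1, by omega⟩ with hpb
  set pc : Fin r := ⟨a + 1 + 1, by omega⟩ with hpc
  have hab : pa ≠ pb := by simp [hpa, hpb, Fin.ext_iff]
  have hbc : pb ≠ pc := by simp [hpb, hpc, Fin.ext_iff]
  have hac : pa ≠ pc := by simp [hpa, hpc, Fin.ext_iff]; omega
  have na : ∀ (h : a < r), (⟨a, h⟩ : Fin r) = pa := fun _ => rfl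
  have nb : ∀ (h : a + 1 < r), (⟨a + 1, h⟩ : Fin r) = pb := fun _ => rfl
  have nc : ∀ (h : a + 1 + 1 < r), (⟨a + 1 + 1, h⟩ : Fin r) = pc := fun _ => rfl
  have braid : ∀ g : Fin r → Fin n,
      ((g ∘ ⇑(Equiv.swap pa pb)) ∘ ⇑(Equiv.swap pb pc)) ∘ ⇑(Equiv.swap pa pb) =
        ((g ∘ ⇑(Equiv.swap pb pc)) ∘ ⇑(Equiv.swap pa pb)) ∘ ⇑(Equiv.swap pb pc) := by
    intro g
    funext x
    simp only [Function.comp_apply]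
    congr 1
    simp only [Equiv.swap_apply_def]
    split_ifs <;> simp_all [Fin.ext_iff]
  have comp2 : ∀ (g : Fin r → Fin n) (x y : Fin r),
      (g ∘ ⇑(Equiv.swap x y)) ∘ ⇑(Equiv.swap x y) = g := by
    intro g x y
    funext t
    simp
  have tri : ∀ x y : Fin n, (x < y ∧ ¬ y < x) ∨ (x = y ∧ x = y) ∨ (y < x ∧ ¬ x < y) := by
    intro x y
    rcases lt_trichotomy x y with h | h | h
    · exact Or.inl ⟨h, asymm h⟩
    · exact Or.inr (Or.inl ⟨h, h⟩)
    · exact Or.inr (Or.inr ⟨h, asymm h⟩)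
  rcases tri (f pa) (f pb) with ⟨h1, h1'⟩ | ⟨h1, h1'⟩ | ⟨h1, h1'⟩ <;>
  rcases tri (f pb) (f pc) with ⟨h2, h2'⟩ | ⟨h2, h2'⟩ | ⟨h2, h2'⟩ <;>
  rcases tri (f pa) (f pc) with ⟨h3, h3'⟩ | ⟨h3, h3'⟩ | ⟨h3, h3'⟩ <;>
  first
  | (exfalso; simp only [Fin.lt_def] at h1 h2 h3; omega)
  | (simp [Module.End.mul_apply, Tq_apply, map_add, map_smul, Function.comp_apply,
      Equiv.swap_apply_left, Equiv.swap_apply_right, Equiv.swap_apply_of_ne_of_ne,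
      hab, hbc, hac, hab.symm, hbc.symm, hac.symm,
      na, nb, nc, h1, h1', h2, h2', h3, h3', braid, comp2, smul_smul, smul_add, mul_comm] <;>
     first
       | exact aux_braid q⁻¹ q (mul_inv_cancel₀ (by simpa [q] using RatFunc.X_ne_zero)) _ _ _
       | exact (aux_braid q⁻¹ q (mul_inv_cancel₀ (by simpa [q] using RatFunc.X_ne_zero)) _ _ _).symm
       | abel)
end
end

section
/- The assignment M_f · T_{s_i} = M_{s_i f} if f(i) < f(i+1), M_f · T_{s_i} = M_{s_i f} + (q^{-1}-q) M_f if f(i) > f(i+1), and M_f · T_{s_i} = q^{-1} M_f if f(i) = f(i+1), extends to a well-defined right action of the Hecke algebra H_q(S_r) on V^{⊗r}. -/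
set_option maxHeartbeats 1000000
set_option synthInstance.maxHeartbeats 1000000

noncomputable section

open FreeAlgebra

/-- The defining relations of the Hecke algebra `H_q(S_r)`. -/
inductive HeckeRel (r : ℕ) : FreeAlgebra Kq (Fin (r - 1)) → FreeAlgebra Kq (Fin (r - 1)) → Prop
  | quad (i : Fin (r - 1)) :
      HeckeRel r ((ι Kq i + q • 1) * (ι Kq i - q⁻¹ • 1)) 0
  | braid (i j : Fin (r - 1)) (h : (i : ℕ) + 1 = j) :
      HeckeRel r (ι Kq i * ι Kq j * ι Kq i) (ι Kq j * ι Kq i * ι Kq j)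
  | comm (i j : Fin (r - 1)) (h : (i : ℕ) + 1 < j) :
      HeckeRel r (ι Kq i * ι Kq j) (ι Kq j * ι Kq i)

/-- The Hecke algebra `H_q(S_r)` over `ℚ(q)`. -/
abbrev Hecke (r : ℕ) := RingQuot (HeckeRel r)

/-- The generator `T_{s_i}` of the Hecke algebra (`i` 0-indexed). -/
def T (r : ℕ) (i : Fin (r - 1)) : Hecke r :=
  RingQuot.mkAlgHom Kq (HeckeRel r) (ι Kq i)

def Eop (n r : ℕ) (a b : Fin r) : Module.End Kq (Vr n r) where
  toFun v := fun g => if g a = g b then q⁻¹ * v g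
    else if g b < g a then v (g ∘ Equiv.swap a b) + (q⁻¹ - q) * v g
    else v (g ∘ Equiv.swap a b)
  map_add' u v := by funext g; simp only [Pi.add_apply]; split_ifs <;> ring
  map_smul' c v := by
    funext g; simp only [Pi.smul_apply, smul_eq_mul, RingHom.id_apply]; split_ifs <;> ring

lemma hq1 : q * q⁻¹ = 1 := mul_inv_cancel₀ (by simpa [q] using RatFunc.X_ne_zero)

lemma comp_swap_swap {n r : ℕ} (g : Fin r → Fin n) (a b : Fin r) :
    (g ∘ ⇑(Equiv.swap a b)) ∘ ⇑(Equiv.swap a b) = g := by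
  funext x; simp [Function.comp_apply, Equiv.swap_apply_self]

lemma quadE {n r : ℕ} {a b : Fin r} (hab : a ≠ b) :
    Eop n r a b * Eop n r a b = (q⁻¹ - q) • Eop n r a b + 1 := by
  apply LinearMap.ext; intro v; funext g
  simp only [Eop, Module.End.mul_apply, LinearMap.coe_mk, AddHom.coe_mk, LinearMap.add_apply,
    LinearMap.smul_apply, Module.End.one_apply, Pi.add_apply, Pi.smul_apply, smul_eq_mul,
    Function.comp_apply, Equiv.swap_apply_left, Equiv.swap_apply_right, comp_swap_swap]
  have h1 := hq1
  split_ifs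
  all_goals try ring
  all_goals try (exfalso; simp only [Fin.lt_def, Fin.ext_iff] at *; omega)
  all_goals try linear_combination (v g) * hq1
  all_goals try linear_combination (v (g ∘ ⇑(Equiv.swap a b))) * hq1

lemma hqne : q ≠ 0 := by simpa [q] using RatFunc.X_ne_zero

lemma commE {n r : ℕ} {a b c d : Fin r} (hab : a ≠ b) (hcd : c ≠ d)
    (hac : a ≠ c) (had : a ≠ d) (hbc : b ≠ c) (hbd : b ≠ d) :
    Eop n r a b * Eop n r c d = Eop n r c d * Eop n r a b := by
  have k1 : (Equiv.swap a b) c = c := Equiv.swap_apply_of_ne_of_ne hac.symm hbc.symm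
  have k2 : (Equiv.swap a b) d = d := Equiv.swap_apply_of_ne_of_ne had.symm hbd.symm
  have k3 : (Equiv.swap c d) a = a := Equiv.swap_apply_of_ne_of_ne hac had
  have k4 : (Equiv.swap c d) b = b := Equiv.swap_apply_of_ne_of_ne hbc hbd
  have e1 : ∀ g : Fin r → Fin n,
      (g ∘ ⇑(Equiv.swap a b)) ∘ ⇑(Equiv.swap c d) = (g ∘ ⇑(Equiv.swap c d)) ∘ ⇑(Equiv.swap a b) := by
    intro g; funext x
    simp only [Function.comp_apply]
    by_cases hxa : x = a <;> by_cases hxb : x = b <;> by_cases hxc : x = c <;> by_cases hxd : x = d <;>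
      simp_all [Equiv.swap_apply_of_ne_of_ne, Equiv.swap_apply_left, Equiv.swap_apply_right]
  apply LinearMap.ext; intro v; funext g
  simp only [Eop, Module.End.mul_apply, LinearMap.coe_mk, AddHom.coe_mk,
    Function.comp_apply, k1, k2, k3, k4, e1]
  split_ifs
  all_goals try ring
  all_goals try (exfalso; simp only [Fin.lt_def, Fin.ext_iff] at *; omega)
  all_goals try linear_combination (v g) * hq1
  all_goals try linear_combination (v (g ∘ ⇑(Equiv.swap a b))) * hq1
  all_goals try linear_combination (v (g ∘ ⇑(Equiv.swap c d))) * hq1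
  all_goals try linear_combination (v ((g ∘ ⇑(Equiv.swap c d)) ∘ ⇑(Equiv.swap a b))) * hq1

lemma braidE {n r : ℕ} {a b c : Fin r} (hab : a ≠ b) (hbc : b ≠ c) (hac : a ≠ c) :
    Eop n r a b * (Eop n r b c * Eop n r a b) = Eop n r b c * (Eop n r a b * Eop n r b c) := by
  have k1 : (Equiv.swap a b) c = c := Equiv.swap_apply_of_ne_of_ne hac.symm hbc.symm
  have k2 : (Equiv.swap b c) a = a := Equiv.swap_apply_of_ne_of_ne hab hac
  have e2 : ∀ g : Fin r → Fin n,
      ((g ∘ ⇑(Equiv.swap a b)) ∘ ⇑(Equiv.swap b c)) ∘ ⇑(Equiv.swap a b)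
        = ((g ∘ ⇑(Equiv.swap b c)) ∘ ⇑(Equiv.swap a b)) ∘ ⇑(Equiv.swap b c) := by
    intro g; funext x
    simp only [Function.comp_apply]
    by_cases hxa : x = a <;> by_cases hxb : x = b <;> by_cases hxc : x = c <;>
      simp_all [Equiv.swap_apply_of_ne_of_ne, Equiv.swap_apply_left, Equiv.swap_apply_right, k1, k2]
  apply LinearMap.ext; intro v; funext g
  simp only [Eop, Module.End.mul_apply, LinearMap.coe_mk, AddHom.coe_mk,
    Function.comp_apply, k1, k2, Equiv.swap_apply_left, Equiv.swap_apply_right,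
    comp_swap_swap, e2]
  split_ifs
  all_goals try ring
  all_goals try (exfalso; simp only [Fin.lt_def, Fin.ext_iff] at *; omega)
  all_goals try linear_combination (v g) * hq1
  all_goals try linear_combination (v (g ∘ ⇑(Equiv.swap a b))) * hq1
  all_goals try linear_combination (v (g ∘ ⇑(Equiv.swap b c))) * hq1
  all_goals try linear_combination (v ((g ∘ ⇑(Equiv.swap a b)) ∘ ⇑(Equiv.swap b c))) * hq1
  all_goals try linear_combination (v ((g ∘ ⇑(Equiv.swap b c)) ∘ ⇑(Equiv.swap a b))) * hq1
  all_goals try linear_combination (v (((g ∘ ⇑(Equiv.swap b c)) ∘ ⇑(Equiv.swap a b)) ∘ ⇑(Equiv.swap b c))) * hq1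
  all_goals try linear_combination ((q⁻¹ - q) * v g) * hq1
  all_goals try linear_combination ((q + q⁻¹) * v g) * hq1
  all_goals try linear_combination ((q - q⁻¹) * v g) * hq1
  all_goals try linear_combination (q⁻¹ * v g) * hq1
  all_goals try linear_combination (q * v g) * hq1

lemma swap_fix {n r : ℕ} {a b : Fin r} (f : Fin r → Fin n) (h : f a = f b) :
    f ∘ ⇑(Equiv.swap a b) = f := by
  funext x
  rcases Equiv.swap_apply_def a b x with _
  by_cases hxa : x = a <;> by_cases hxb : x = b <;>
    simp_all [Equiv.swap_apply_of_ne_of_ne, Equiv.swap_apply_left, Equiv.swap_apply_right]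

lemma basisE {n r : ℕ} {a b : Fin r} (hab : a ≠ b) (f : Fin r → Fin n) :
    Eop n r a b (bVr n r f) =
      if f a < f b then bVr n r (f ∘ ⇑(Equiv.swap a b))
      else if f b < f a then bVr n r (f ∘ ⇑(Equiv.swap a b)) + (q⁻¹ - q) • bVr n r f
      else q⁻¹ • bVr n r f := by
  funext g
  simp only [bVr, Eop, LinearMap.coe_mk, AddHom.coe_mk, Pi.basisFun_apply, ite_apply,
    Pi.add_apply, Pi.smul_apply, smul_eq_mul, Pi.single_apply]
  by_cases hQ : g = f <;> by_cases hP : g ∘ ⇑(Equiv.swap a b) = f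
  · -- g = f and f ∘ s = f
    have hfe : f a = f b := by
      have := congrFun hP a
      simp only [Function.comp_apply, Equiv.swap_apply_left, hQ] at this
      exact this.symm
    subst hQ
    simp_all [lt_irrefl, swap_fix]
  · have hfe : f a ≠ f b := fun h => hP (by rw [hQ, swap_fix f h])
    subst hQ
    have hne : ¬ (g ∘ ⇑(Equiv.swap a b)) = g := hP
    have h1 : (g ∘ ⇑(Equiv.swap a b)) ≠ g := hne
    have h2 : g ≠ g ∘ ⇑(Equiv.swap a b) := fun h => h1 h.symm
    split_ifs <;> simp_all [comp_swap_swap] <;> (try (exfalso; omega)) <;> omega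
  · -- g = f ∘ s, g ≠ f
    have hg : g = f ∘ ⇑(Equiv.swap a b) := by
      rw [← hP, comp_swap_swap]
    have hga : g a = f b := by rw [hg]; simp [Equiv.swap_apply_left]
    have hgb : g b = f a := by rw [hg]; simp [Equiv.swap_apply_right]
    have hfe : f a ≠ f b := fun h => hQ (by rw [hg, swap_fix f h])
    split_ifs <;> simp_all [comp_swap_swap] <;> (try (exfalso; omega)) <;> omega
  · split_ifs <;> simp_all [comp_swap_swap] <;> (try (exfalso; omega)) <;> omega

def gen (n r : ℕ) (i : Fin (r - 1)) : (Module.End Kq (Vr n r))ᵐᵒᵖ :=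
  MulOpposite.op (Eop n r ⟨i, by have := i.isLt; omega⟩ ⟨i + 1, by have := i.isLt; omega⟩)

lemma quadOp {n r : ℕ} {a b : Fin r} (hab : a ≠ b) :
    (MulOpposite.op (Eop n r a b) + q • 1) * (MulOpposite.op (Eop n r a b) - q⁻¹ • 1) = 0 := by
  apply MulOpposite.unop_injective
  simp only [MulOpposite.unop_mul, MulOpposite.unop_add, MulOpposite.unop_sub,
    MulOpposite.unop_smul, MulOpposite.unop_one, MulOpposite.unop_zero, MulOpposite.unop_op]
  rw [sub_mul, mul_add, mul_add, quadE hab, mul_smul_comm, mul_one, smul_mul_assoc, one_mul,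
    smul_mul_assoc, mul_smul_comm, mul_one, smul_smul, inv_mul_cancel₀ hqne, one_smul,
    sub_smul q⁻¹ q (Eop n r a b)]
  abel


/-- The q-swap rule `M_f · T_{s_i}` extends to a well-defined right action of `H_q(S_r)`
on `V^{⊗r}`, i.e. an algebra homomorphism `Ψ` from the Hecke algebra to the opposite algebra
of endomorphisms of `V^{⊗r}`, with `Ψ(T_{s_i})` acting on each basis vector `M_f` by:
`M_{s_i f}` if `f(i) < f(i+1)`; `M_{s_i f} + (q⁻¹-q) M_f` if `f(i) > f(i+1)`;
`q⁻¹ M_f` if `f(i) = f(i+1)`. -/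
theorem stmt4 (n r : ℕ) :
    ∃ Ψ : Hecke r →ₐ[Kq] (Module.End Kq (Vr n r))ᵐᵒᵖ,
      ∀ (a : ℕ) (ha : a + 1 < r) (f : Fin r → Fin n),
        (Ψ (T r ⟨a, Nat.lt_sub_of_add_lt ha⟩)).unop (bVr n r f) =
          (let pa : Fin r := ⟨a, Nat.lt_of_succ_lt ha⟩
           let pb : Fin r := ⟨a + 1, ha⟩
           if f pa < f pb then bVr n r (f ∘ Equiv.swap pa pb)
           else if f pb < f pa then bVr n r (f ∘ Equiv.swap pa pb) + (q⁻¹ - q) • bVr n r f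
           else q⁻¹ • bVr n r f) := by
  have hrel : ∀ ⦃x y : FreeAlgebra Kq (Fin (r-1))⦄, HeckeRel r x y →
      (FreeAlgebra.lift Kq (gen n r)) x = (FreeAlgebra.lift Kq (gen n r)) y := by
    intro x y h
    induction h with
    | quad i =>
        simp only [map_mul, map_add, map_sub, map_smul, map_one, map_zero, FreeAlgebra.lift_ι_apply]
        exact quadOp (by have := i.isLt; simp only [ne_eq, Fin.mk.injEq]; omega)
    | braid i j h =>
        simp only [map_mul, FreeAlgebra.lift_ι_apply, gen]
        rw [← MulOpposite.op_mul, ← MulOpposite.op_mul, ← MulOpposite.op_mul, ← MulOpposite.op_mul]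
        congr 1
        have hij1 : (⟨(j : ℕ), by have := j.isLt; omega⟩ : Fin r) = ⟨(i:ℕ)+1, by have := i.isLt; omega⟩ := by
          simp only [Fin.mk.injEq]; omega
        have hij2 : (⟨(j : ℕ)+1, by have := j.isLt; omega⟩ : Fin r) = ⟨(i:ℕ)+2, by have := j.isLt; omega⟩ := by
          simp only [Fin.mk.injEq]; omega
        rw [hij1, hij2]
        exact braidE (by simp only [ne_eq, Fin.mk.injEq]; omega)
          (by simp only [ne_eq, Fin.mk.injEq]; omega) (by simp only [ne_eq, Fin.mk.injEq]; omega)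
    | comm i j h =>
        simp only [map_mul, FreeAlgebra.lift_ι_apply, gen]
        rw [← MulOpposite.op_mul, ← MulOpposite.op_mul]
        congr 1
        exact (commE (by simp only [ne_eq, Fin.mk.injEq]; omega) (by simp only [ne_eq, Fin.mk.injEq]; omega)
          (by simp only [ne_eq, Fin.mk.injEq]; omega) (by simp only [ne_eq, Fin.mk.injEq]; omega)
          (by simp only [ne_eq, Fin.mk.injEq]; omega) (by simp only [ne_eq, Fin.mk.injEq]; omega)).symm
  refine ⟨RingQuot.liftAlgHom Kq ⟨FreeAlgebra.lift Kq (gen n r), hrel⟩, ?_⟩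
  intro a ha f
  have hT : (RingQuot.liftAlgHom Kq ⟨FreeAlgebra.lift Kq (gen n r), hrel⟩) (T r ⟨a, Nat.lt_sub_of_add_lt ha⟩)
      = gen n r ⟨a, Nat.lt_sub_of_add_lt ha⟩ := by
    rw [T, RingQuot.liftAlgHom_mkAlgHom_apply, FreeAlgebra.lift_ι_apply]
  rw [hT]
  simp only [gen, MulOpposite.unop_op]
  exact basisE (by simp only [ne_eq, Fin.mk.injEq]; omega) f
end
end
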